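/- For all natural numbers m, k, l: (1/[l]_q!) Σ_{j=0}^{l} (-1)^{l-j} q^{j(j+1)/2 - l(k+j)} [l choose j]_q [k+j]_q^m = Σ_{j=0}^{k} q^{j(j-1)/2} [l+j choose j]_q ([k]_q! / [k-j]_q!) S_q(m, l+j), i.e. the non-central q-Stirling number of the second kind with non-centrality parameter k equals the stated combination of ordinary q-Stirling numbers of the second kind. -/

import Mathlib

open Finset

/-- The q-Pochhammer symbol `(a;q)_n = ∏_{j=0}^{n-1} (1 - a q^j)`. -/
def qPoch {F : Type*} [Field F] (q a : F) (n : ℕ) : F :=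
  ∏ j ∈ Finset.range n, (1 - a * q ^ j)

/-- The q-binomial coefficient `[n choose i]_q`, equal to 0 when `i > n`. -/
def qBinom {F : Type*} [Field F] (q : F) (n i : ℕ) : F :=
  if i ≤ n then qPoch q q n / (qPoch q q i * qPoch q q (n - i)) else 0

/-- The q-integer `[n]_q = (1-q^n)/(1-q)`. -/
def qInt {F : Type*} [Field F] (q : F) (n : ℕ) : F := (1 - q ^ n) / (1 - q)

/-- The q-dual sequence `a*_n = ∑_{i=0}^n (-1)^i [n choose i]_q q^{i(i-1)/2} a_i`. -/
def qDual {F : Type*} [Field F] (q : F) (a : ℕ → F) (n : ℕ) : F :=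
  ∑ i ∈ Finset.range (n + 1), (-1 : F) ^ i * qBinom q n i * q ^ (i.choose 2) * a i

/-- The q-factorial `[n]_q! = ∏_{j=1}^n [j]_q`. -/
def qFact {F : Type*} [Field F] (q : F) (n : ℕ) : F :=
  ∏ j ∈ Finset.range n, qInt q (j + 1)

/-- Carlitz's q-Stirling number of the second kind
`S_q(m,n) = (q^{-n(n-1)/2}/[n]_q!) ∑_{i=0}^n (-1)^i q^{i(i-1)/2} [n choose i]_q [n-i]_q^m`. -/
def qStirling2 {F : Type*} [Field F] (q : F) (m n : ℕ) : F :=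
  (q ^ (-(n.choose 2 : ℤ)) / qFact q n) *
    ∑ i ∈ Finset.range (n + 1), (-1 : F) ^ i * q ^ (i.choose 2) * qBinom q n i *
      (qInt q (n - i)) ^ m

section Aux
set_option linter.unusedSectionVars false
variable {F : Type*} [Field F] {q : F}

lemma c2succ (n : ℕ) : (n+1).choose 2 = n + n.choose 2 := by
  rw [Nat.choose_succ_succ, Nat.choose_one_right]

lemma c2add (a b : ℕ) : (a+b).choose 2 = a.choose 2 + b.choose 2 + a*b := by
  induction b with
  | zero => simp
  | succ b ih => rw [← Nat.add_assoc, c2succ, c2succ, ih]; ring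

lemma two_c2 (a : ℕ) : 2 * a.choose 2 + a = a * a := by
  induction a with
  | zero => simp
  | succ a ih => rw [c2succ]; nlinarith [ih]

lemma qFact_succ (n : ℕ) : qFact q (n+1) = qFact q n * qInt q (n+1) :=
  prod_range_succ _ _

variable (hq0 : q ≠ 0) (hq : ∀ m : ℕ, 0 < m → q ^ m ≠ 1)
include hq

lemma one_sub_q_pow_ne (n : ℕ) (h : 0 < n) : (1 : F) - q ^ n ≠ 0 :=
  sub_ne_zero.2 fun e => hq n h e.symm

lemma one_sub_q_ne : (1 : F) - q ≠ 0 := by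
  have := one_sub_q_pow_ne (q := q) hq 1 one_pos; simpa using this

lemma qInt_ne (n : ℕ) (h : 0 < n) : qInt q n ≠ 0 :=
  div_ne_zero (one_sub_q_pow_ne hq n h) (one_sub_q_ne hq)

lemma qFact_ne (n : ℕ) : qFact q n ≠ 0 := by
  induction n with
  | zero => simp [qFact]
  | succ n ih => rw [qFact_succ]; exact mul_ne_zero ih (qInt_ne hq _ n.succ_pos)

lemma qPoch_eq (n : ℕ) : qPoch q q n = (1 - q) ^ n * qFact q n := by
  unfold qPoch qFact
  have hc : (1 - q : F) ^ n = ∏ _j ∈ range n, (1 - q) := by simp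
  rw [hc, ← prod_mul_distrib]
  refine prod_congr rfl fun j _ => ?_
  rw [qInt, mul_div_cancel₀ _ (one_sub_q_ne hq), pow_succ']

lemma qBinom_fact {i n : ℕ} (h : i ≤ n) :
    qBinom q n i = qFact q n / (qFact q i * qFact q (n - i)) := by
  rw [qBinom, if_pos h, qPoch_eq hq, qPoch_eq hq, qPoch_eq hq]
  have hp : (1 - q : F) ^ i * (1 - q) ^ (n - i) = (1 - q) ^ n := by
    rw [← pow_add]; congr 1; omega
  rw [mul_mul_mul_comm, hp, mul_div_mul_left _ _ (pow_ne_zero n (one_sub_q_ne hq))]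

lemma qBinom_zero_right (n : ℕ) : qBinom q n 0 = 1 := by
  rw [qBinom_fact hq (Nat.zero_le n)]
  simp only [Nat.sub_zero, qFact, range_zero, prod_empty, one_mul]
  exact div_self (qFact_ne hq n)

lemma qBinom_self (n : ℕ) : qBinom q n n = 1 := by
  rw [qBinom_fact hq le_rfl]
  simp only [Nat.sub_self, qFact, range_zero, prod_empty, mul_one]
  exact div_self (qFact_ne hq n)

omit hq in
lemma qBinom_eq_zero {i n : ℕ} (h : n < i) : qBinom q n i = 0 :=
  if_neg (by omega)

lemma qBinom_symm {i n : ℕ} (h : i ≤ n) : qBinom q n (n - i) = qBinom q n i := by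
  rw [qBinom_fact hq (Nat.sub_le n i), qBinom_fact hq h]
  rw [Nat.sub_sub_self h, mul_comm]


lemma qInt_core {i n : ℕ} (h : i ≤ n) :
    qInt q (n+1) = qInt q (i+1) + q^(i+1) * qInt q (n-i) := by
  have hp : (q:F)^(i+1) * q^(n-i) = q^(n+1) := by rw [← pow_add]; congr 1; omega
  unfold qInt
  field_simp
  linear_combination (1-q)⁻¹ * hp

lemma qInt_core' {i n : ℕ} (h : i ≤ n) :
    qInt q (n+1) = qInt q (n-i) + q^(n-i) * qInt q (i+1) := by
  have hp : (q:F)^(n-i) * q^(i+1) = q^(n+1) := by rw [← pow_add]; congr 1; omega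
  unfold qInt
  field_simp
  linear_combination (1-q)⁻¹ * hp

lemma qInt_split {i n : ℕ} (h : i ≤ n) :
    qInt q (n - i) = qInt q n - q^(n-i) * qInt q i := by
  have hp : (q:F)^(n-i) * q^i = q^n := by rw [← pow_add]; congr 1; omega
  unfold qInt
  field_simp
  linear_combination -(1-q)⁻¹ * hp

lemma pascal1 (n i : ℕ) :
    qBinom q (n+1) (i+1) = q^(i+1) * qBinom q n (i+1) + qBinom q n i := by
  rcases lt_trichotomy i n with h | h | h
  · have hni : n - i = (n - i - 1) + 1 := by omega
    have e1 : qFact q (n-i) = qFact q (n-i-1) * qInt q (n-i) := by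
      conv_lhs => rw [hni]; rw [qFact_succ]
      rw [← hni]
    have e2 : n - (i+1) = n - i - 1 := by omega
    have e3 : (n+1) - (i+1) = n - i := by omega
    rw [qBinom_fact hq (by omega), qBinom_fact hq (by omega), qBinom_fact hq (by omega),
      e2, e3, qFact_succ n, e1, qFact_succ i, qInt_core hq (le_of_lt h)]
    have hC : qInt q (n - i) ≠ 0 := qInt_ne hq _ (by omega)
    have hB : qInt q (i+1) ≠ 0 := qInt_ne hq _ (by omega)
    field_simp [qFact_ne hq]
    ring
  · subst h
    rw [qBinom_self hq, qBinom_self hq, qBinom_eq_zero (by omega), mul_zero, zero_add]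
  · rw [qBinom_eq_zero (by omega), qBinom_eq_zero (by omega), qBinom_eq_zero (by omega)]
    ring

lemma pascal2 (n i : ℕ) :
    qBinom q (n+1) (i+1) = qBinom q n (i+1) + q^(n-i) * qBinom q n i := by
  rcases lt_trichotomy i n with h | h | h
  · have hni : n - i = (n - i - 1) + 1 := by omega
    have e1 : qFact q (n-i) = qFact q (n-i-1) * qInt q (n-i) := by
      conv_lhs => rw [hni]; rw [qFact_succ]
      rw [← hni]
    have e2 : n - (i+1) = n - i - 1 := by omega
    have e3 : (n+1) - (i+1) = n - i := by omega
    rw [qBinom_fact hq (by omega), qBinom_fact hq (by omega), qBinom_fact hq (by omega),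
      e2, e3, qFact_succ n, e1, qFact_succ i, qInt_core' hq (le_of_lt h)]
    have hC : qInt q (n - i) ≠ 0 := qInt_ne hq _ (by omega)
    have hB : qInt q (i+1) ≠ 0 := qInt_ne hq _ (by omega)
    field_simp [qFact_ne hq]
  · subst h
    rw [qBinom_self hq, qBinom_self hq, qBinom_eq_zero (by omega), Nat.sub_self, pow_zero]
    ring
  · rw [qBinom_eq_zero (by omega), qBinom_eq_zero (by omega), qBinom_eq_zero (by omega)]
    ring


lemma G_eval : ∀ l n i : ℕ, l ≤ n →
    ∑ j ∈ range (l+1), (-1:F)^j * q^(j.choose 2) * qBinom q l j * qBinom q (n-j) i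
    = if l ≤ i then q^(l*(n-i)) * qBinom q (n-l) (i-l) else 0 := by
  intro l
  induction l with
  | zero =>
    intro n i _
    simp [qBinom_zero_right hq]
  | succ l ih =>
    intro n i hln
    have hl1 : l ≤ n - 1 := by omega
    rw [Finset.sum_range_succ']
    have hsplit : (∑ j ∈ range (l+1),
        (-1:F)^(j+1) * q^((j+1).choose 2) * qBinom q (l+1) (j+1) * qBinom q (n-(j+1)) i)
      = (∑ j ∈ range (l+1), (-1:F)^(j+1) * q^((j+1).choose 2) * qBinom q l (j+1) * qBinom q (n-(j+1)) i)
        + (-q^l) * ∑ j ∈ range (l+1), (-1:F)^j * q^(j.choose 2) * qBinom q l j * qBinom q ((n-1)-j) i := by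
      rw [mul_sum, ← sum_add_distrib]
      refine sum_congr rfl fun j hj => ?_
      simp only [mem_range] at hj
      rw [pascal2 hq l j]
      have hsw : n - (j+1) = (n-1) - j := by omega
      rw [hsw]
      have e2 : (q:F)^((j+1).choose 2) * q^(l-j) = q^l * q^(j.choose 2) := by
        rw [← pow_add, ← pow_add]; congr 1; rw [c2succ]; omega
      linear_combination ((-1:F)^(j+1) * qBinom q l j * qBinom q ((n-1)-j) i) * e2
    have f0eq : (-1:F)^0 * q^(Nat.choose 0 2) * qBinom q (l+1) 0 * qBinom q (n-0) i
        = qBinom q n i := by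
      simp [qBinom_zero_right hq]
    rw [hsplit, f0eq]
    have hA : (∑ j ∈ range (l+1),
          (-1:F)^(j+1) * q^((j+1).choose 2) * qBinom q l (j+1) * qBinom q (n-(j+1)) i)
        + qBinom q n i
      = ∑ j ∈ range (l+1), (-1:F)^j * q^(j.choose 2) * qBinom q l j * qBinom q (n-j) i := by
      have h2 := Finset.sum_range_succ'
        (fun j => (-1:F)^j * q^(j.choose 2) * qBinom q l j * qBinom q (n-j) i) (l+1)
      have h3 := Finset.sum_range_succ
        (fun j => (-1:F)^j * q^(j.choose 2) * qBinom q l j * qBinom q (n-j) i) (l+1)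
      rw [h3, qBinom_eq_zero (show l < l+1 by omega)] at h2
      simp only [mul_zero, zero_mul, add_zero] at h2
      rw [h2]
      simp [qBinom_zero_right hq]
    rw [add_right_comm, hA, ih n i (by omega), ih (n-1) i hl1,
      show n - 1 - l = n - (l+1) from by omega]
    by_cases hli : l + 1 ≤ i
    · have hli' : l ≤ i := by omega
      rw [if_pos hli', if_pos hli', if_pos hli]
      by_cases hin : i ≤ n - 1
      · have hp := pascal2 hq (n-l-1) (i-l-1)
        have r1 : n - l - 1 + 1 = n - l := by omega
        have r2 : i - l - 1 + 1 = i - l := by omega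
        have r3 : n - l - 1 - (i - l - 1) = n - i := by omega
        have r4 : i - l - 1 = i - (l+1) := by omega
        have r5 : n - l - 1 = n - (l+1) := by omega
        rw [r1, r2, r3, r4, r5] at hp
        have e3 : (q:F)^((l+1)*(n-i)) = q^(l*(n-i)) * q^(n-i) := by
          rw [← pow_add]; congr 1; ring
        have e4 : (q:F)^l * q^(l*(n-1-i)) = q^(l*(n-i)) := by
          rw [← pow_add]; congr 1
          have : n - 1 - i + 1 = n - i := by omega
          rw [← this]; ring
        linear_combination (q:F)^(l*(n-i)) * hp
          - qBinom q (n-(l+1)) (i-l) * e4 - qBinom q (n-(l+1)) (i-(l+1)) * e3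
      · rcases Nat.lt_or_ge n i with hni | hni
        · rw [qBinom_eq_zero (show n - l < i - l by omega),
            qBinom_eq_zero (show n - (l+1) < i - l by omega),
            qBinom_eq_zero (show n - (l+1) < i - (l+1) by omega)]
          ring
        · rw [show i - l = n - l from by omega, show i - (l+1) = n - (l+1) from by omega,
            show n - i = 0 from by omega, show n - 1 - i = 0 from by omega,
            qBinom_self hq, qBinom_eq_zero (show n - (l+1) < n - l from by omega),
            qBinom_self hq]
          simp
    · rw [if_neg hli]
      by_cases hle : l ≤ i
      · have h0 : i - l = 0 := by omega
        rw [if_pos hle, if_pos hle, h0, qBinom_zero_right hq, qBinom_zero_right hq]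
        have e4 : (q:F)^l * q^(l*(n-1-i)) = q^(l*(n-i)) := by
          rw [← pow_add]; congr 1
          have h5 : n - 1 - i + 1 = n - i := by omega
          rw [← h5]; ring
        linear_combination -e4
      · rw [if_neg hle, if_neg hle]; ring


lemma binom_absorb (n i : ℕ) :
    qInt q (i+1) * qBinom q (n+1) (i+1) = qInt q (n+1) * qBinom q n i := by
  rcases le_or_gt i n with h | h
  · rw [qBinom_fact hq (by omega), qBinom_fact hq h, Nat.succ_sub_succ,
      qFact_succ n, qFact_succ i]
    have hB : qInt q (i+1) ≠ 0 := qInt_ne hq _ (by omega)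
    have hN : qInt q (n+1) ≠ 0 := qInt_ne hq _ (by omega)
    field_simp [qFact_ne hq]
  · rw [qBinom_eq_zero (by omega), qBinom_eq_zero (by omega)]; ring

omit hq in
lemma qInt_zero : qInt q 0 = 0 := by simp [qInt]

lemma stirling_m0 (m : ℕ) (hm : 0 < m) : qStirling2 q m 0 = 0 := by
  unfold qStirling2
  rw [Finset.sum_range_one]
  simp [qInt_zero, zero_pow (by omega : m ≠ 0)]

lemma stirling_base (n : ℕ) : qStirling2 q 0 n = if n = 0 then 1 else 0 := by
  unfold qStirling2
  have hG := G_eval hq n n 0 le_rfl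
  have hsum : (∑ i ∈ Finset.range (n + 1), (-1 : F) ^ i * q ^ (i.choose 2) * qBinom q n i *
      (qInt q (n - i)) ^ 0)
      = ∑ j ∈ range (n+1), (-1:F)^j * q^(j.choose 2) * qBinom q n j * qBinom q (n-j) 0 := by
    refine sum_congr rfl fun i _ => ?_
    rw [pow_zero, qBinom_zero_right hq]
  rw [hsum, hG]
  rcases Nat.eq_zero_or_pos n with h | h
  · subst h
    simp [qBinom_zero_right hq, qFact]
  · rw [if_neg (by omega), if_neg (by omega), mul_zero]

lemma stirling_succ (hq0 : q ≠ 0) (m n : ℕ) :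
    qStirling2 q (m+1) (n+1) = qStirling2 q m n + qInt q (n+1) * qStirling2 q m (n+1) := by
  have step1 : (∑ i ∈ Finset.range (n + 1 + 1), (-1 : F) ^ i * q ^ (i.choose 2) *
        qBinom q (n+1) i * (qInt q (n + 1 - i)) ^ (m+1))
      = qInt q (n+1) * (∑ i ∈ Finset.range (n + 1 + 1), (-1 : F) ^ i * q ^ (i.choose 2) *
          qBinom q (n+1) i * (qInt q (n + 1 - i)) ^ m)
        - ∑ i ∈ Finset.range (n + 1 + 1), (-1 : F) ^ i * q ^ (i.choose 2) *
            q ^ (n + 1 - i) * qInt q i * qBinom q (n+1) i * (qInt q (n + 1 - i)) ^ m := by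
    rw [mul_sum, ← sum_sub_distrib]
    refine sum_congr rfl fun i hi => ?_
    simp only [mem_range] at hi
    have hx : qInt q (n + 1 - i) = qInt q (n+1) - q^(n+1-i) * qInt q i :=
      qInt_split hq (by omega)
    linear_combination ((-1:F)^i * q^(i.choose 2) * qBinom q (n+1) i *
      (qInt q (n + 1 - i))^m) * hx
  have step2 : (∑ i ∈ Finset.range (n + 1 + 1), (-1 : F) ^ i * q ^ (i.choose 2) *
        q ^ (n + 1 - i) * qInt q i * qBinom q (n+1) i * (qInt q (n + 1 - i)) ^ m)
      = -(q^n * qInt q (n+1) * ∑ i ∈ Finset.range (n + 1), (-1 : F) ^ i * q ^ (i.choose 2) *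
          qBinom q n i * (qInt q (n - i)) ^ m) := by
    rw [Finset.sum_range_succ' (fun i => (-1 : F) ^ i * q ^ (i.choose 2) *
        q ^ (n + 1 - i) * qInt q i * qBinom q (n+1) i * (qInt q (n + 1 - i)) ^ m) (n+1)]
    simp only [qInt_zero, mul_zero, zero_mul, add_zero]
    rw [mul_sum, ← Finset.sum_neg_distrib]
    refine sum_congr rfl fun i hi => ?_
    simp only [mem_range] at hi
    have hab := binom_absorb hq n i
    have e2 : (q:F)^((i+1).choose 2) * q^(n+1-(i+1)) = q^(i.choose 2) * q^n := by
      rw [← pow_add, ← pow_add]; congr 1; rw [c2succ]; omega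
    have e3 : n + 1 - (i + 1) = n - i := by omega
    rw [e3] at e2 ⊢
    linear_combination ((-1:F)^(i+1) * (qInt q (n-i))^m * q^(i.choose 2) * q^n) * hab
      + ((-1:F)^(i+1) * (qInt q (n-i))^m * qInt q (i+1) * qBinom q (n+1) (i+1)) * e2
  unfold qStirling2
  rw [step1, step2]
  simp only [zpow_neg, zpow_natCast]
  have hpow : (q:F)^((n+1).choose 2) = q^n * q^(n.choose 2) := by
    rw [← pow_add]; congr 1; rw [c2succ]
  have hqn : (q:F)^n ≠ 0 := pow_ne_zero _ hq0
  have hc2 : (q:F)^(n.choose 2) ≠ 0 := pow_ne_zero _ hq0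
  have hc2' : (q:F)^((n+1).choose 2) ≠ 0 := pow_ne_zero _ hq0
  rw [hpow]
  have hN : qInt q (n+1) ≠ 0 := qInt_ne hq _ (by omega)
  field_simp [qFact_ne hq, qFact_succ]
  rw [qFact_succ n]
  ring


omit hq in
lemma qInt_core'' {i n : ℕ} (h : i ≤ n) :
    qInt q n = qInt q i + q^i * qInt q (n-i) := by
  have hp : (q:F)^i * q^(n-i) = q^n := by rw [← pow_add]; congr 1; omega
  unfold qInt
  field_simp
  linear_combination (1-q)⁻¹ * hp

lemma mulrel (n i : ℕ) (h : i ≤ n) :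
    qBinom q n i * qInt q (n-i) = qInt q (i+1) * qBinom q n (i+1) := by
  rcases Nat.lt_or_ge i n with h' | h'
  · obtain ⟨a, ha⟩ : ∃ a, n - i = a + 1 := ⟨n - i - 1, by omega⟩
    have ha2 : n - (i+1) = a := by omega
    rw [qBinom_fact hq h, qBinom_fact hq (by omega : i+1 ≤ n), ha, ha2,
      qFact_succ a, qFact_succ i]
    have h1 : qInt q (a+1) ≠ 0 := qInt_ne hq _ (by omega)
    have h2 : qInt q (i+1) ≠ 0 := qInt_ne hq _ (by omega)
    field_simp [qFact_ne hq]
  · have hje : i = n := by omega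
    subst hje
    rw [Nat.sub_self, qInt_zero, mul_zero, qBinom_eq_zero (show i < i + 1 by omega),
      mul_zero]

lemma absorb2 (n i : ℕ) :
    qBinom q n i * qInt q n
    = qInt q i * qBinom q n i + q^i * (qInt q (i+1) * qBinom q n (i+1)) := by
  rcases le_or_gt i n with h | h
  · have hc : qInt q n = qInt q i + q^i * qInt q (n-i) := qInt_core'' h
    have hm := mulrel hq n i h
    rw [hc]
    linear_combination (q:F)^i * hm
  · rw [qBinom_eq_zero h, qBinom_eq_zero (by omega)]; ring

lemma expand (hq0 : q ≠ 0) (m n N : ℕ) (hnN : n ≤ N) :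
    qInt q n ^ m = ∑ i ∈ range (N+1),
      qStirling2 q m i * qFact q i * qBinom q n i * q^(i.choose 2) := by
  induction m with
  | zero =>
    rw [pow_zero, Finset.sum_eq_single 0]
    · rw [stirling_base hq, if_pos rfl, qBinom_zero_right hq]
      simp [qFact]
    · intro b _ hb
      rw [stirling_base hq, if_neg hb]
      ring
    · intro habs; exact absurd (mem_range.mpr (by omega)) habs
  | succ m ih =>
    rw [pow_succ, ih]
    have key : (∑ i ∈ range (N+1),
          qStirling2 q m i * qFact q i * qBinom q n i * q^(i.choose 2)) * qInt q n
      = (∑ i ∈ range (N+1), qStirling2 q m i * qFact q i * qInt q i * qBinom q n i * q^(i.choose 2))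
        + ∑ i ∈ range (N+1), qStirling2 q m i * qFact q (i+1) * qBinom q n (i+1) * q^((i+1).choose 2) := by
      rw [sum_mul, ← sum_add_distrib]
      refine sum_congr rfl fun i _ => ?_
      have hab := absorb2 hq n i
      have e2 : (q:F)^(i.choose 2) * q^i = q^((i+1).choose 2) := by
        rw [← pow_add]; congr 1; rw [c2succ]; omega
      rw [qFact_succ i]
      linear_combination (qStirling2 q m i * qFact q i * q^(i.choose 2)) * hab
        + (qStirling2 q m i * qFact q i * qInt q (i+1) * qBinom q n (i+1)) * e2
    rw [key]
    have hP := Finset.sum_range_succ'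
      (fun i => qStirling2 q m i * qFact q i * qInt q i * qBinom q n i * q^(i.choose 2)) N
    have hQ := Finset.sum_range_succ
      (fun i => qStirling2 q m i * qFact q (i+1) * qBinom q n (i+1) * q^((i+1).choose 2)) N
    have hT := Finset.sum_range_succ'
      (fun i => qStirling2 q (m+1) i * qFact q i * qBinom q n i * q^(i.choose 2)) N
    rw [hP, hQ, hT, qInt_zero, qBinom_eq_zero (show n < N+1 by omega),
      stirling_m0 hq (m+1) (by omega)]
    simp only [mul_zero, zero_mul, add_zero, zero_add]
    rw [← sum_add_distrib]
    refine sum_congr rfl fun i _ => ?_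
    have hs := stirling_succ hq hq0 m i
    linear_combination (-(qFact q (i+1) * qBinom q n (i+1) * q^((i+1).choose 2))) * hs

end Aux

theorem stmt18 {F : Type*} [Field F] (q : F) (hq0 : q ≠ 0)
    (hq : ∀ m : ℕ, 0 < m → q ^ m ≠ 1) (m k l : ℕ) :
    (1 / qFact q l) * ∑ j ∈ Finset.range (l + 1), (-1 : F) ^ (l - j) *
        q ^ (((j + 1).choose 2 : ℤ) - (l : ℤ) * ((k : ℤ) + j)) * qBinom q l j *
        (qInt q (k + j)) ^ m =
    ∑ j ∈ Finset.range (k + 1), q ^ (j.choose 2) * qBinom q (l + j) j *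
        (qFact q k / qFact q (k - j)) * qStirling2 q m (l + j) := by
  classical
  set C : F := (q^(l.choose 2))⁻¹ * (q^(l*k))⁻¹ with hC
  have h1 : (∑ j ∈ Finset.range (l + 1), (-1 : F) ^ (l - j) *
        q ^ (((j + 1).choose 2 : ℤ) - (l : ℤ) * ((k : ℤ) + j)) * qBinom q l j *
        (qInt q (k + j)) ^ m)
      = ∑ j ∈ Finset.range (l + 1), C *
          ((-1:F)^j * q^(j.choose 2) * qBinom q l j * (qInt q ((k+l) - j)) ^ m) := by
    rw [← Finset.sum_range_reflect (fun j => (-1 : F) ^ (l - j) *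
      q ^ (((j + 1).choose 2 : ℤ) - (l : ℤ) * ((k : ℤ) + (j:ℤ))) * qBinom q l j *
      (qInt q (k + j)) ^ m) (l+1)]
    refine sum_congr rfl fun j hj => ?_
    simp only [mem_range] at hj
    have hj' : j ≤ l := by omega
    have e0 : l + 1 - 1 - j = l - j := by omega
    rw [e0, show l - (l - j) = j from by omega, qBinom_symm hq hj',
      show k + (l - j) = (k+l) - j from by omega]
    have hE : (((l-j+1).choose 2 : ℤ) - (l:ℤ)*((k:ℤ) + ((l-j : ℕ):ℤ)))
        = (j.choose 2 : ℤ) - (l.choose 2 : ℤ) - ((l*k : ℕ) : ℤ) := by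
      obtain ⟨a, ha⟩ : ∃ a, l = j + a := ⟨l - j, by omega⟩
      subst ha
      rw [show j + a - j = a from by omega]
      have h1 : ((j+a).choose 2 : ℤ) = (j.choose 2 : ℤ) + (a.choose 2 : ℤ) + (j:ℤ)*(a:ℤ) := by
        exact_mod_cast congrArg (fun x : ℕ => (x:ℤ)) (c2add j a)
      have h2 : ((a+1).choose 2 : ℤ) = (a:ℤ) + (a.choose 2:ℤ) := by
        exact_mod_cast congrArg (fun x : ℕ => (x:ℤ)) (c2succ a)
      have h3 : 2*(a.choose 2:ℤ) + (a:ℤ) = (a:ℤ)*(a:ℤ) := by exact_mod_cast two_c2 a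
      push_cast
      linear_combination h2 + h1 + h3
    rw [hE, sub_sub, zpow_sub₀ hq0, zpow_natCast, zpow_add₀ hq0, zpow_natCast,
      zpow_natCast]
    rw [hC]
    field_simp
  rw [h1]
  have h3 : (∑ j ∈ Finset.range (l + 1), C *
        ((-1:F)^j * q^(j.choose 2) * qBinom q l j * (qInt q ((k+l) - j)) ^ m))
      = ∑ i ∈ range ((k+l)+1), (qStirling2 q m i * qFact q i * q^(i.choose 2) * C) *
          ∑ j ∈ range (l+1), (-1:F)^j * q^(j.choose 2) * qBinom q l j * qBinom q ((k+l)-j) i := by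
    have hpt : ∀ j ∈ range (l+1), C *
        ((-1:F)^j * q^(j.choose 2) * qBinom q l j * (qInt q ((k+l) - j)) ^ m)
        = ∑ i ∈ range ((k+l)+1), (qStirling2 q m i * qFact q i * q^(i.choose 2) * C) *
            ((-1:F)^j * q^(j.choose 2) * qBinom q l j * qBinom q ((k+l)-j) i) := by
      intro j hj
      rw [expand hq hq0 m ((k+l)-j) (k+l) (by omega), Finset.mul_sum]
      rw [Finset.mul_sum]
      refine sum_congr rfl fun i _ => ?_
      ring
    rw [sum_congr rfl hpt, Finset.sum_comm]
    refine sum_congr rfl fun i _ => ?_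
    rw [← Finset.mul_sum]
  rw [h3]
  have h4 : (∑ i ∈ range ((k+l)+1), (qStirling2 q m i * qFact q i * q^(i.choose 2) * C) *
        ∑ j ∈ range (l+1), (-1:F)^j * q^(j.choose 2) * qBinom q l j * qBinom q ((k+l)-j) i)
      = ∑ t ∈ range (k+1), (qStirling2 q m (l+t) * qFact q (l+t) * q^((l+t).choose 2) * C) *
          (q^(l*(k-t)) * qBinom q k t) := by
    have hG : ∀ i, (∑ j ∈ range (l+1), (-1:F)^j * q^(j.choose 2) * qBinom q l j *
          qBinom q ((k+l)-j) i)
        = if l ≤ i then q^(l*((k+l)-i)) * qBinom q k (i-l) else 0 := by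
      intro i
      rw [G_eval hq l (k+l) i (by omega), show k + l - l = k from by omega]
    have hsplit : (k+l)+1 = l + (k+1) := by omega
    rw [sum_congr rfl (fun i _ => by rw [hG i]), hsplit, Finset.sum_range_add]
    have hz : (∑ i ∈ range l, (qStirling2 q m i * qFact q i * q^(i.choose 2) * C) *
          (if l ≤ i then q^(l*((k+l)-i)) * qBinom q k (i-l) else 0)) = 0 := by
      refine sum_eq_zero fun i hi => ?_
      simp only [mem_range] at hi
      rw [if_neg (by omega), mul_zero]
    rw [hz, zero_add]
    refine sum_congr rfl fun t ht => ?_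
    simp only [mem_range] at ht
    rw [if_pos (by omega : l ≤ l + t), show l + t - l = t from by omega,
      show k + l - (l + t) = k - t from by omega]
  rw [h4, Finset.mul_sum]
  refine sum_congr rfl fun t ht => ?_
  simp only [mem_range] at ht
  have ht' : t ≤ k := by omega
  have epow : (q:F)^((l+t).choose 2) * q^(l*(k-t)) = q^(t.choose 2) * q^(l.choose 2) * q^(l*k) := by
    rw [← pow_add, ← pow_add, ← pow_add]
    congr 1
    have h1 := c2add l t
    have h2 : l*t + l*(k-t) = l*k := by rw [← Nat.mul_add]; congr 1; omega
    rw [h1]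
    linarith [h2]
  rw [qBinom_fact hq ht', qBinom_fact hq (show t ≤ l+t by omega),
    show l + t - t = l from by omega]
  have hp1 : (q:F)^(l.choose 2) ≠ 0 := pow_ne_zero _ hq0
  have hp2 : (q:F)^(l*k) ≠ 0 := pow_ne_zero _ hq0
  have epow' : C * ((q:F)^((l+t).choose 2) * q^(l*(k-t))) = q^(t.choose 2) := by
    rw [hC, epow]
    field_simp
  linear_combination (qStirling2 q m (l+t) * qFact q (l+t) * qFact q k *
    (qFact q l)⁻¹ * (qFact q t)⁻¹ * (qFact q (k-t))⁻¹) * epow'
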